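/- For every integer k ≤ −1, every real η, and every c > 0, the vertical-line integral (1/(2πi)) ∫_{L_{0+}} e^{v² + 2ηv} v^{−k−1} dv (along the upward vertical line Re v = c) equals (2^k/√π) · e^{−η²} · H_{−k−1}(−η), where H_j denotes the physicists' Hermite polynomial; in particular, the left-hand side is independent of c > 0. -/

import Mathlib

open MeasureTheory

/-- The integral `∫_{L_{0+}} f(v) dv = ∫_ℝ f(c + it)·i dt` along the upward vertical line
`Re v = c`. -/
noncomputable def lineInt (c : ℝ) (f : ℂ → ℂ) : ℂ :=
  ∫ t : ℝ, f (c + t * Complex.I) * Complex.I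

/-- The physicists' Hermite polynomial `H_j(x) = (-1)^j e^{x²} (d/dx)^j e^{-x²}`. -/
noncomputable def physHermite (j : ℕ) (x : ℝ) : ℝ :=
  (-1) ^ j * Real.exp (x ^ 2) * iteratedDeriv j (fun t => Real.exp (-(t ^ 2))) x

namespace PhiAux

open Complex

private lemma int_abs_pow (j : ℕ) : Integrable fun t : ℝ => |t| ^ j * Real.exp (-t ^ 2) := by
  have hj : (-1:ℝ) < (j:ℝ) := lt_of_lt_of_le (by norm_num) (Nat.cast_nonneg j)
  have h := (integrable_rpow_mul_exp_neg_mul_sq one_pos hj).abs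
  refine h.congr (Filter.Eventually.of_forall fun t => ?_)
  simp only [neg_one_mul, abs_mul, abs_pow, ← Real.rpow_natCast |t| j,
    Real.abs_rpow_of_nonneg (abs_nonneg t), abs_abs, Real.abs_exp]
  rw [Real.rpow_natCast, Real.rpow_natCast, _root_.abs_pow]

private lemma integrable_aux (a : ℝ) (n : ℕ) :
    Integrable fun t : ℝ => (a + |t|) ^ n * Real.exp (-t ^ 2) := by
  have h := integrable_finset_sum (Finset.range (n+1))
    (fun k _ => ((int_abs_pow (n - k)).const_mul (a ^ k * (n.choose k : ℝ))))
  refine h.congr (Filter.Eventually.of_forall fun t => ?_)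
  simp only []
  rw [add_pow, Finset.sum_mul]
  exact Finset.sum_congr rfl fun k _ => by ring

private lemma base (c η : ℝ) :
    ∫ t : ℝ, Complex.exp (((c:ℂ) + t * I) ^ 2 + 2 * η * ((c:ℂ) + t * I))
      = (Real.sqrt Real.pi * Real.exp (-(η ^ 2)) : ℝ) := by
  have hrw : ∀ t : ℝ, ((c:ℂ) + t * I) ^ 2 + 2 * η * ((c:ℂ) + t * I)
      = (-1 : ℂ) * t ^ 2 + ((2*c+2*η) * I) * t + (c ^ 2 + 2*η*c) := fun t => by
    linear_combination (t:ℂ)^2 * Complex.I_sq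
  simp_rw [hrw]
  rw [integral_cexp_quadratic (by simp : (-1:ℂ).re < 0)]
  have h1 : ((c:ℂ) ^ 2 + 2*η*c) - ((2*(c:ℂ)+2*η) * I) ^ 2 / (4 * (-1)) = -(η:ℂ) ^ 2 := by
    linear_combination ((c:ℂ)+(η:ℂ))^2 * Complex.I_sq
  rw [h1]
  have h2 : ((Real.sqrt Real.pi : ℝ) : ℂ) = (↑Real.pi / -(-1)) ^ (1/2 : ℂ) := by
    rw [Real.sqrt_eq_rpow, Complex.ofReal_cpow Real.pi_nonneg]
    norm_num
  rw [← h2]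
  push_cast
  ring

private lemma norm_integrand (c η : ℝ) (n : ℕ) (t : ℝ) :
    ‖Complex.exp (((c:ℂ) + t * I) ^ 2 + 2 * η * ((c:ℂ) + t * I)) * ((c:ℂ) + t * I) ^ n‖
      ≤ (|c| + |t|) ^ n * Real.exp (-t ^ 2) * Real.exp (c ^ 2 + 2 * η * c) := by
  have hre : (((c:ℂ) + t * I) ^ 2 + 2 * η * ((c:ℂ) + t * I)).re = c ^ 2 + 2 * η * c - t ^ 2 := by
    simp [Complex.add_re, Complex.mul_re, Complex.mul_im, pow_two]
    ring
  have habs : ‖(c:ℂ) + t * I‖ ≤ |c| + |t| := by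
    have := Complex.norm_le_abs_re_add_abs_im ((c:ℂ) + t * I)
    simpa using this
  rw [norm_mul, norm_pow, Complex.norm_exp, hre]
  calc Real.exp (c ^ 2 + 2 * η * c - t ^ 2) * ‖(c:ℂ) + t * I‖ ^ n
      ≤ Real.exp (c ^ 2 + 2 * η * c - t ^ 2) * (|c| + |t|) ^ n := by
        gcongr
    _ = (|c| + |t|) ^ n * Real.exp (-t ^ 2) * Real.exp (c ^ 2 + 2 * η * c) := by
        rw [sub_eq_add_neg, Real.exp_add]
        ring

private lemma cont_integrand (c η : ℝ) (n : ℕ) :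
    Continuous fun t : ℝ =>
      Complex.exp (((c:ℂ) + t * I) ^ 2 + 2 * η * ((c:ℂ) + t * I)) * ((c:ℂ) + t * I) ^ n := by
  fun_prop

private lemma integrable_main (c η : ℝ) (n : ℕ) :
    Integrable fun t : ℝ =>
      Complex.exp (((c:ℂ) + t * I) ^ 2 + 2 * η * ((c:ℂ) + t * I)) * ((c:ℂ) + t * I) ^ n := by
  refine Integrable.mono' ((integrable_aux |c| n).mul_const (Real.exp (c ^ 2 + 2 * η * c)))
    (cont_integrand c η n).aestronglyMeasurable
    (Filter.Eventually.of_forall fun t => norm_integrand c η n t)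

private lemma deriv_step (c : ℝ) (n : ℕ) (η : ℝ) :
    HasDerivAt (fun x : ℝ => ∫ t : ℝ,
        Complex.exp (((c:ℂ) + t * I) ^ 2 + 2 * (x:ℂ) * ((c:ℂ) + t * I)) * ((c:ℂ) + t * I) ^ n)
      (∫ t : ℝ, 2 * (Complex.exp (((c:ℂ) + t * I) ^ 2 + 2 * η * ((c:ℂ) + t * I)) *
        ((c:ℂ) + t * I) ^ (n + 1))) η := by
  have key := hasDerivAt_integral_of_dominated_loc_of_deriv_le (μ := volume) (x₀ := η)
    (F := fun (x : ℝ) (t : ℝ) =>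
      Complex.exp (((c:ℂ) + t * I) ^ 2 + 2 * (x:ℂ) * ((c:ℂ) + t * I)) * ((c:ℂ) + t * I) ^ n)
    (F' := fun (x : ℝ) (t : ℝ) =>
      2 * (Complex.exp (((c:ℂ) + t * I) ^ 2 + 2 * (x:ℂ) * ((c:ℂ) + t * I)) *
        ((c:ℂ) + t * I) ^ (n + 1)))
    (bound := fun t : ℝ =>
      2 * ((|c| + |t|) ^ (n + 1) * Real.exp (-t ^ 2) * Real.exp (c ^ 2 + 2 * (|η| + 1) * |c|)))
    (s := Metric.ball η 1) (Metric.ball_mem_nhds η one_pos)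
    (Filter.Eventually.of_forall fun x => (cont_integrand c x n).aestronglyMeasurable)
    (integrable_main c η n)
    ((continuous_const.mul (cont_integrand c η (n + 1))).aestronglyMeasurable)
    ?_ ?_ ?_
  · exact key.2
  · refine Filter.Eventually.of_forall fun t => fun x hx => ?_
    rw [norm_mul]
    rw [show ‖(2:ℂ)‖ = 2 by norm_num]
    have h2 : Real.exp (c ^ 2 + 2 * x * c) ≤ Real.exp (c ^ 2 + 2 * (|η| + 1) * |c|) := by
      apply Real.exp_le_exp.2
      have hx1 : |x| ≤ |η| + 1 := by
        have hb : |x - η| < 1 := by simpa [Real.dist_eq] using Metric.mem_ball.1 hx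
        have := abs_sub_abs_le_abs_sub x η
        linarith
      have : x * c ≤ (|η| + 1) * |c| := by
        calc x * c ≤ |x * c| := le_abs_self _
          _ = |x| * |c| := abs_mul x c
          _ ≤ (|η| + 1) * |c| := by
              apply mul_le_mul_of_nonneg_right hx1 (abs_nonneg c)
      linarith
    calc (2:ℝ) * ‖Complex.exp (((c:ℂ) + t * I) ^ 2 + 2 * x * ((c:ℂ) + t * I)) *
          ((c:ℂ) + t * I) ^ (n+1)‖
        ≤ 2 * ((|c| + |t|) ^ (n + 1) * Real.exp (-t ^ 2) * Real.exp (c ^ 2 + 2 * x * c)) := by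
          gcongr
          exact norm_integrand c x (n+1) t
      _ ≤ 2 * ((|c| + |t|) ^ (n + 1) * Real.exp (-t ^ 2) *
            Real.exp (c ^ 2 + 2 * (|η| + 1) * |c|)) := by
          gcongr
  · exact ((integrable_aux |c| (n + 1)).mul_const _).const_mul 2
  · refine Filter.Eventually.of_forall fun t => fun x hx => ?_
    have h0 : HasDerivAt (fun y : ℝ => (y : ℂ)) 1 x := (hasDerivAt_id x).ofReal_comp
    have h1 : HasDerivAt (fun y : ℝ => ((c:ℂ) + t * I) ^ 2 + 2 * (y:ℂ) * ((c:ℂ) + t * I))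
        (2 * ((c:ℂ) + t * I)) x := by
      have := ((h0.const_mul (2:ℂ)).mul_const ((c:ℂ) + t * I)).const_add (((c:ℂ) + t * I) ^ 2)
      exact this.congr_deriv (by ring)
    have := h1.cexp.mul_const (((c:ℂ) + t * I) ^ n)
    exact this.congr_deriv (by ring)

private lemma gsmooth : ContDiff ℝ ⊤ (fun t : ℝ => Real.exp (-(t ^ 2))) :=
  Real.contDiff_exp.comp ((contDiff_id.pow 2).neg)

private lemma key (c : ℝ) (n : ℕ) (η : ℝ) :
    ∫ t : ℝ, Complex.exp (((c:ℂ) + t * I) ^ 2 + 2 * η * ((c:ℂ) + t * I)) * ((c:ℂ) + t * I) ^ n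
      = ((Real.sqrt Real.pi / 2 ^ n : ℝ) : ℂ) *
          ((iteratedDeriv n (fun t : ℝ => Real.exp (-(t ^ 2))) η : ℝ) : ℂ) := by
  induction n generalizing η with
  | zero =>
      simpa [iteratedDeriv_zero, Complex.ofReal_mul] using base c η
  | succ n ih =>
      have h1 : HasDerivAt (iteratedDeriv n (fun t : ℝ => Real.exp (-(t ^ 2))))
          (iteratedDeriv (n + 1) (fun t : ℝ => Real.exp (-(t ^ 2))) η) η := by
        rw [iteratedDeriv_succ]
        exact (((gsmooth.of_le le_top).differentiable_iteratedDeriv n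
          (Nat.cast_lt.mpr n.lt_succ_self)) η).hasDerivAt
      have hD : HasDerivAt (fun x : ℝ => ((Real.sqrt Real.pi / 2 ^ n : ℝ) : ℂ) *
            ((iteratedDeriv n (fun t : ℝ => Real.exp (-(t ^ 2))) x : ℝ) : ℂ))
          (((Real.sqrt Real.pi / 2 ^ n : ℝ) : ℂ) *
            ((iteratedDeriv (n + 1) (fun t : ℝ => Real.exp (-(t ^ 2))) η : ℝ) : ℂ)) η :=
        (h1.ofReal_comp).const_mul _
      have hL := deriv_step c n η
      have hfun : (fun x : ℝ => ∫ t : ℝ,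
          Complex.exp (((c:ℂ) + t * I) ^ 2 + 2 * (x:ℂ) * ((c:ℂ) + t * I)) * ((c:ℂ) + t * I) ^ n)
          = fun x : ℝ => ((Real.sqrt Real.pi / 2 ^ n : ℝ) : ℂ) *
            ((iteratedDeriv n (fun t : ℝ => Real.exp (-(t ^ 2))) x : ℝ) : ℂ) :=
        funext fun x => ih x
      rw [hfun] at hL
      have huniq := hL.unique hD
      rw [MeasureTheory.integral_const_mul] at huniq
      refine mul_left_cancel₀ (two_ne_zero' ℂ) ?_
      rw [huniq]
      push_cast
      ring

end PhiAux

open Complex in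
/-- For every integer `k ≤ -1`, every real `η` and every `c > 0`, the vertical-line
integral `(1/(2πi)) ∫_{L_{0+}} e^{v² + 2ηv} v^{-k-1} dv` equals
`(2^k/√π) e^{-η²} H_{-k-1}(-η)`; in particular it is independent of `c > 0`. -/
theorem phi_integral_negative_index (k : ℤ) (hk : k ≤ -1) (η : ℝ) (c : ℝ) (hc : 0 < c) :
    (1 / (2 * Real.pi * Complex.I)) *
        lineInt c (fun v => Complex.exp (v ^ 2 + 2 * η * v) * v ^ (-k - 1))
      = (((2 : ℝ) ^ k / Real.sqrt Real.pi) * Real.exp (-η ^ 2) *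
          physHermite (-k - 1).toNat (-η) : ℝ) := by
  set n := (-k - 1).toNat with hn
  have hkn : (-k - 1 : ℤ) = (n : ℤ) := (Int.toNat_of_nonneg (by omega)).symm
  have hgeq : (fun x : ℝ => Real.exp (-((-x) ^ 2))) = fun t : ℝ => Real.exp (-(t ^ 2)) := by
    funext x; rw [neg_sq]
  have heven : iteratedDeriv n (fun t : ℝ => Real.exp (-(t ^ 2))) (-η)
      = (-1 : ℝ) ^ n * iteratedDeriv n (fun t : ℝ => Real.exp (-(t ^ 2))) η := by
    have h := iteratedDeriv_comp_neg n (fun t : ℝ => Real.exp (-(t ^ 2))) (-η)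
    rw [neg_neg, smul_eq_mul] at h
    calc iteratedDeriv n (fun t : ℝ => Real.exp (-(t ^ 2))) (-η)
        = iteratedDeriv n (fun x : ℝ => Real.exp (-((-x) ^ 2))) (-η) := by rw [hgeq]
      _ = (-1 : ℝ) ^ n * iteratedDeriv n (fun t : ℝ => Real.exp (-(t ^ 2))) η := h
  have hphys : physHermite n (-η)
      = Real.exp (η ^ 2) * iteratedDeriv n (fun t : ℝ => Real.exp (-(t ^ 2))) η := by
    have hpow : ((-1 : ℝ)) ^ n * ((-1 : ℝ)) ^ n = 1 := by
      rw [← mul_pow]; norm_num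
    rw [physHermite, heven, neg_sq]
    linear_combination Real.exp (η ^ 2) *
      iteratedDeriv n (fun t : ℝ => Real.exp (-(t ^ 2))) η * hpow
  have h2k : (2 : ℝ) ^ k = ((2 : ℝ) ^ (n + 1))⁻¹ := by
    rw [show k = -((n + 1 : ℕ) : ℤ) by omega, zpow_neg, zpow_natCast]
  have hss : Real.sqrt Real.pi * Real.sqrt Real.pi = Real.pi :=
    Real.mul_self_sqrt Real.pi_nonneg
  have hsne : Real.sqrt Real.pi ≠ 0 := by positivity
  have hee : Real.exp (-η ^ 2) * Real.exp (η ^ 2) = 1 := by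
    rw [← Real.exp_add]; simp
  have hreal : (2 : ℝ) ^ k / Real.sqrt Real.pi * Real.exp (-η ^ 2) * physHermite n (-η)
      = Real.sqrt Real.pi / 2 ^ n * iteratedDeriv n (fun t : ℝ => Real.exp (-(t ^ 2))) η
          / (2 * Real.pi) := by
    rw [hphys, h2k]
    field_simp
    linear_combination (iteratedDeriv n (fun t : ℝ => Real.exp (-(t ^ 2))) η *
        (2 ^ n * (2 * Real.pi))) * hee -
      (iteratedDeriv n (fun t : ℝ => Real.exp (-(t ^ 2))) η * 2 ^ (n + 1)) * hss
  rw [lineInt]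
  simp only [hkn, zpow_natCast]
  rw [MeasureTheory.integral_mul_const, PhiAux.key c n η, hreal]
  push_cast
  field_simp [Complex.I_ne_zero]
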